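/- Let c = (3/2)·((1+√2)^{1/3} − (1+√2)^{−1/3}). For every real x with −3 < x < c, ∑_{k=0}^∞ (s(x)·k + t(x))·x^{3k}/((x−1)^k · C(3k,k)) = 12x²(1−x)·log(1−x) − 27(1−x)(x² − 6x + 3), where s(x) = (x+3)(2x−3)²(x²−12x+9) and t(x) = 2x⁵ − 48x⁴ + 69x³ − 189x² + 243x − 81. -/

import Mathlib

open MeasureTheory intervalIntegral Real

-- beta integral for naturals
lemma beta_nat : ∀ (n m : ℕ), (∫ t in (0:ℝ)..1, t ^ m * (1 - t) ^ n)
    = (m.factorial * n.factorial : ℝ) / (m + n + 1).factorial := by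
  intro n
  induction n with
  | zero =>
    intro m
    simp only [pow_zero, mul_one, integral_pow, one_pow, Nat.factorial_zero]
    rw [show m + 0 + 1 = m + 1 by ring, Nat.factorial_succ]
    have h1 : (m.factorial : ℝ) ≠ 0 := by positivity
    push_cast
    rw [div_eq_div_iff (by positivity) (by positivity)]
    ring
  | succ n ih =>
    intro m
    have hu : ∀ t ∈ Set.uIcc (0:ℝ) 1, HasDerivAt (fun t : ℝ => (1 - t) ^ (n+1))
        (-((n+1) * (1 - t)^n)) t := by
      intro t _
      have := ((hasDerivAt_id t).const_sub 1).pow (n+1)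
      refine this.congr_deriv ?_
      simp only [id, Nat.add_sub_cancel]; push_cast; ring
    have hv : ∀ t ∈ Set.uIcc (0:ℝ) 1, HasDerivAt (fun t : ℝ => t ^ (m+1) / (m+1))
        (t ^ m) t := by
      intro t _
      have h := (hasDerivAt_pow (m+1) t).div_const ((m:ℝ)+1)
      have hm : ((m:ℝ)+1) ≠ 0 := by positivity
      refine h.congr_deriv ?_
      push_cast
      field_simp
    have hiu : IntervalIntegrable (fun t : ℝ => -((n+1) * (1 - t)^n)) volume 0 1 := by
      apply Continuous.intervalIntegrable; continuity
    have hiv : IntervalIntegrable (fun t : ℝ => t ^ m) volume 0 1 := by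
      apply Continuous.intervalIntegrable; continuity
    have key := integral_mul_deriv_eq_deriv_mul hu hv hiu hiv
    simp only [one_pow, sub_self, zero_pow, Nat.succ_ne_zero, ne_eq, not_false_iff] at key
    -- key : ∫ (1-t)^(n+1) * t^m = ...
    have : (∫ t in (0:ℝ)..1, t ^ m * (1 - t) ^ (n+1))
        = ∫ t in (0:ℝ)..1, (1 - t) ^ (n+1) * t ^ m := by
      congr 1; ext t; ring
    rw [this, key]
    have h2 : (∫ t in (0:ℝ)..1, -((n+1) * (1 - t)^n) * (t ^ (m+1) / (m+1)))
        = -((n+1)/(m+1)) * ∫ t in (0:ℝ)..1, t ^ (m+1) * (1-t)^n := by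
      rw [← intervalIntegral.integral_const_mul]
      congr 1; ext t; ring
    rw [h2, ih (m+1)]
    have hm : ((m:ℝ)+1) ≠ 0 := by positivity
    have hf1 : ((m+1).factorial : ℝ) = (m+1) * m.factorial := by
      rw [Nat.factorial_succ]; push_cast; ring
    have hf2 : ((n+1).factorial : ℝ) = (n+1) * n.factorial := by
      rw [Nat.factorial_succ]; push_cast; ring
    have he : m + 1 + n + 1 = m + (n+1) + 1 := by ring
    rw [he, hf1, hf2]
    have hfp : ((m + (n+1) + 1).factorial : ℝ) ≠ 0 := by positivity
    have hnf : (n.factorial : ℝ) ≠ 0 := by positivity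
    have hmf : (m.factorial : ℝ) ≠ 0 := by positivity
    field_simp
    ring

lemma key_ineq (x : ℝ) (hx1 : -3 < x)
    (hx2 : x < (3 / 2) * ((1 + Real.sqrt 2) ^ ((1 : ℝ) / 3) - (1 + Real.sqrt 2) ^ (-(1 : ℝ) / 3))) :
    4 * |x| ^ 3 < 27 * (1 - x) := by
  rcases le_or_gt x 0 with hx0 | hx0
  · rw [abs_of_nonpos hx0]
    have h32 : (2*x - 3)^2 > 0 := by nlinarith
    nlinarith [sq_nonneg (2*x-3)]
  · rw [abs_of_pos hx0]
    set r := (1 + Real.sqrt 2) ^ ((1 : ℝ) / 3) with hrdef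
    have hs2 : Real.sqrt 2 ^ 2 = 2 := Real.sq_sqrt (by norm_num)
    have hspos : 0 < Real.sqrt 2 := Real.sqrt_pos.2 (by norm_num)
    have hbpos : (0:ℝ) < 1 + Real.sqrt 2 := by linarith
    have hrpos : 0 < r := Real.rpow_pos_of_pos hbpos _
    have hr3 : r ^ 3 = 1 + Real.sqrt 2 := by
      rw [hrdef, ← Real.rpow_natCast ((1 + Real.sqrt 2) ^ ((1:ℝ)/3)) 3,
        ← Real.rpow_mul hbpos.le]
      norm_num
    have hinv : (1 + Real.sqrt 2) ^ (-(1 : ℝ) / 3) = r⁻¹ := by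
      rw [hrdef, ← Real.rpow_neg hbpos.le]
      norm_num
    rw [hinv] at hx2
    set c := (3 / 2) * (r - r⁻¹) with hcdef
    have hri : r * r⁻¹ = 1 := mul_inv_cancel₀ hrpos.ne'
    have hi3 : (r⁻¹) ^ 3 = Real.sqrt 2 - 1 := by
      have h1 : (r ^ 3) * (r⁻¹)^3 = 1 := by
        rw [← mul_pow, hri, one_pow]
      rw [hr3] at h1
      have h2 : (1 + Real.sqrt 2) * (Real.sqrt 2 - 1) = 1 := by nlinarith
      have := mul_left_cancel₀ (a := 1 + Real.sqrt 2) hbpos.ne' (h1.trans h2.symm)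
      linarith [this]
    have hgc : 4 * c ^ 3 + 27 * c - 27 = 0 := by
      rw [hcdef]
      linear_combination (27/2) * hr3 - (27/2) * hi3 - (81/2) * (r - r⁻¹) * hri
    have hcx : x < c := hx2
    nlinarith [sq_nonneg (x + c), sq_nonneg x, sq_nonneg c, mul_pos hx0 (hx0.trans hcx)]

lemma hasDerivAt_poly5 (c0 c1 c2 c3 c4 c5 t : ℝ) :
    HasDerivAt (fun t : ℝ => c0 + c1*t + c2*t^2 + c3*t^3 + c4*t^4 + c5*t^5)
      (c1 + 2*c2*t + 3*c3*t^2 + 4*c4*t^3 + 5*c5*t^4) t := by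
  have h := (((((hasDerivAt_const t c0).add ((hasDerivAt_id t).const_mul c1)).add
      ((hasDerivAt_pow 2 t).const_mul c2)).add ((hasDerivAt_pow 3 t).const_mul c3)).add
      ((hasDerivAt_pow 4 t).const_mul c4)).add ((hasDerivAt_pow 5 t).const_mul c5)
  refine h.congr_deriv ?_
  push_cast; ring

lemma hasDerivAt_poly3 (c0 c1 c2 c3 t : ℝ) :
    HasDerivAt (fun t : ℝ => c0 + c1*t + c2*t^2 + c3*t^3)
      (c1 + 2*c2*t + 3*c3*t^2) t := by
  have h := (((hasDerivAt_const t c0).add ((hasDerivAt_id t).const_mul c1)).add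
      ((hasDerivAt_pow 2 t).const_mul c2)).add ((hasDerivAt_pow 3 t).const_mul c3)
  refine h.congr_deriv ?_
  push_cast; ring

lemma hasDerivAt_poly2 (c0 c1 c2 t : ℝ) :
    HasDerivAt (fun t : ℝ => c0 + c1*t + c2*t^2) (c1 + 2*c2*t) t := by
  have h := ((hasDerivAt_const t c0).add ((hasDerivAt_id t).const_mul c1)).add
      ((hasDerivAt_pow 2 t).const_mul c2)
  refine h.congr_deriv ?_
  push_cast; ring

noncomputable def auxA (x t : ℝ) : ℝ :=
  (54 - 270*x + 504*x^2 - 432*x^3 + 162*x^4 - 18*x^5)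
  + (-81 + 405*x - 756*x^2 + 810*x^3 - 831*x^4 + 751*x^5 - 332*x^6 + 34*x^7) * t
  + (-702*x^3 + 2478*x^4 - 2974*x^5 + 1322*x^6 - 136*x^7 + 16*x^8 - 4*x^9) * t^2
  + (864*x^3 - 3024*x^4 + 3600*x^5 - 1584*x^6 + 180*x^7 - 48*x^8 + 12*x^9) * t^3
  + (-324*x^3 + 1134*x^4 - 1350*x^5 + 594*x^6 - 90*x^7 + 48*x^8 - 12*x^9) * t^4
  + (12*x^7 - 16*x^8 + 4*x^9) * t^5

noncomputable def auxA' (x t : ℝ) : ℝ :=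
  (-81 + 405*x - 756*x^2 + 810*x^3 - 831*x^4 + 751*x^5 - 332*x^6 + 34*x^7)
  + 2*(-702*x^3 + 2478*x^4 - 2974*x^5 + 1322*x^6 - 136*x^7 + 16*x^8 - 4*x^9) * t
  + 3*(864*x^3 - 3024*x^4 + 3600*x^5 - 1584*x^6 + 180*x^7 - 48*x^8 + 12*x^9) * t^2
  + 4*(-324*x^3 + 1134*x^4 - 1350*x^5 + 594*x^6 - 90*x^7 + 48*x^8 - 12*x^9) * t^3
  + 5*(12*x^7 - 16*x^8 + 4*x^9) * t^4

noncomputable def auxD (x t : ℝ) : ℝ := (x-1) + (-(x^3))*t + (2*x^3)*t^2 + (-(x^3))*t^3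
noncomputable def auxD' (x t : ℝ) : ℝ := (-(x^3)) + 2*(2*x^3)*t + 3*(-(x^3))*t^2
noncomputable def auxL (x t : ℝ) : ℝ := x*t + (1-x)
noncomputable def auxM (x t : ℝ) : ℝ := (-1) + (x^2+x)*t + (-(x^2))*t^2
noncomputable def auxM' (x t : ℝ) : ℝ := (x^2+x) + 2*(-(x^2))*t

noncomputable def auxH (x t : ℝ) : ℝ :=
  auxA x t / (auxD x t)^2 + (8*x^3-8*x^2) * Real.log (auxL x t)
    + (4*x^2-4*x^3) * Real.log (-(auxM x t))

noncomputable def auxR (x s b t : ℝ) : ℝ :=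
  6*s * (1/(1 - (x^3/(x-1)) * (t*(1-t)^2))^3)
  + (3*b-8*s) * (1/(1 - (x^3/(x-1)) * (t*(1-t)^2))^2)
  + (2*s-2*b) * (1 - (x^3/(x-1)) * (t*(1-t)^2))⁻¹

lemma auxLM (x t : ℝ) : auxL x t * auxM x t = auxD x t := by
  simp only [auxL, auxM, auxD]; ring


lemma auxStar (x t : ℝ) :
    auxA' x t * (auxL x t * auxM x t) - 2 * auxA x t * auxD' x t
      + (8*x^3-8*x^2) * x * (auxL x t)^2 * (auxM x t)^3
      + (4*x^2-4*x^3) * auxM' x t * (auxL x t)^3 * (auxM x t)^2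
    = 6*((x + 3) * (2*x - 3)^2 * (x^2 - 12*x + 9))*(x-1)^3
      + (3*(2*x^5 - 48*x^4 + 69*x^3 - 189*x^2 + 243*x - 81)
          - 8*((x + 3) * (2*x - 3)^2 * (x^2 - 12*x + 9)))*(x-1)^2*(auxL x t * auxM x t)
      + (2*((x + 3) * (2*x - 3)^2 * (x^2 - 12*x + 9))
          - 2*(2*x^5 - 48*x^4 + 69*x^3 - 189*x^2 + 243*x - 81))*(x-1)*(auxL x t)^2*(auxM x t)^2 := by
  simp only [auxA, auxA', auxD', auxL, auxM, auxM']
  ring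

set_option maxHeartbeats 2000000 in
lemma auxH_deriv (x t : ℝ)
    (hxm : x - 1 ≠ 0)
    (hD : auxD x t ≠ 0) (hL : 0 < auxL x t) (hM : 0 < -(auxM x t)) :
    HasDerivAt (auxH x)
      (auxR x ((x + 3) * (2*x - 3)^2 * (x^2 - 12*x + 9))
        (2*x^5 - 48*x^4 + 69*x^3 - 189*x^2 + 243*x - 81) t) t := by
  have hMne : auxM x t ≠ 0 := fun h => by simp [h] at hM
  have hDA : HasDerivAt (fun t => auxA x t) (auxA' x t) t := hasDerivAt_poly5 _ _ _ _ _ _ t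
  have hDD : HasDerivAt (fun t => auxD x t) (auxD' x t) t := hasDerivAt_poly3 _ _ _ _ t
  have hDL : HasDerivAt (fun t => auxL x t) x t := by
    unfold auxL
    simpa using ((hasDerivAt_id t).const_mul x).add_const (1-x)
  have hDM : HasDerivAt (fun t => -(auxM x t)) (-(auxM' x t)) t :=
    (hasDerivAt_poly2 _ _ _ t).neg
  have hD2 : (auxD x t)^2 ≠ 0 := pow_ne_zero _ hD
  have hdiv : HasDerivAt (fun t => auxA x t / (auxD x t)^2)
      ((auxA' x t * (auxD x t)^2 - auxA x t * (2 * auxD x t ^ 1 * auxD' x t)) / ((auxD x t)^2)^2) t :=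
    hDA.div (hDD.pow 2) hD2
  have hlog1 : HasDerivAt (fun t => Real.log (auxL x t)) (x / auxL x t) t :=
    hDL.log hL.ne'
  have hlog2 : HasDerivAt (fun t => Real.log (-(auxM x t))) ((-(auxM' x t)) / (-(auxM x t))) t :=
    hDM.log hM.ne'
  have htot := (hdiv.add (hlog1.const_mul (8*x^3-8*x^2))).add (hlog2.const_mul (4*x^2-4*x^3))
  have heq : auxH x = fun t => auxA x t / (auxD x t)^2
      + (8*x^3-8*x^2) * Real.log (auxL x t) + (4*x^2-4*x^3) * Real.log (-(auxM x t)) := by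
    funext y; simp [auxH]
  rw [heq]
  refine htot.congr_deriv ?_
  have hLne : auxL x t ≠ 0 := hL.ne'
  have hMne' : -(auxM x t) ≠ 0 := hM.ne'
  have hLM := auxLM x t
  have hLMne : auxL x t * auxM x t ≠ 0 := mul_ne_zero hLne hMne
  have hzrw : (1:ℝ) - (x^3/(x-1)) * (t*(1-t)^2) = (auxL x t * auxM x t) / (x-1) := by
    rw [hLM, auxD]; field_simp; ring
  have rhs_eq : (auxA' x t * (auxD x t)^2 - auxA x t * (2 * auxD x t ^ 1 * auxD' x t)) / ((auxD x t)^2)^2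
      + (8*x^3-8*x^2) * (x / auxL x t) + (4*x^2-4*x^3) * ((-(auxM' x t)) / (-(auxM x t)))
      = (auxA' x t * (auxL x t * auxM x t) - 2 * auxA x t * auxD' x t
          + (8*x^3-8*x^2) * x * (auxL x t)^2 * (auxM x t)^3
          + (4*x^2-4*x^3) * auxM' x t * (auxL x t)^3 * (auxM x t)^2) / (auxL x t * auxM x t)^3 := by
    rw [← hLM]
    field_simp
  have lhs_eq : auxR x ((x + 3) * (2*x - 3)^2 * (x^2 - 12*x + 9))
        (2*x^5 - 48*x^4 + 69*x^3 - 189*x^2 + 243*x - 81) t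
      = (6*((x + 3) * (2*x - 3)^2 * (x^2 - 12*x + 9))*(x-1)^3
          + (3*(2*x^5 - 48*x^4 + 69*x^3 - 189*x^2 + 243*x - 81)
              - 8*((x + 3) * (2*x - 3)^2 * (x^2 - 12*x + 9)))*(x-1)^2*(auxL x t * auxM x t)
          + (2*((x + 3) * (2*x - 3)^2 * (x^2 - 12*x + 9))
              - 2*(2*x^5 - 48*x^4 + 69*x^3 - 189*x^2 + 243*x - 81))*(x-1)
              *(auxL x t)^2*(auxM x t)^2) / (auxL x t * auxM x t)^3 := by
    rw [auxR, hzrw]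
    field_simp
  rw [lhs_eq, rhs_eq, auxStar x t]

set_option maxHeartbeats 2000000 in
theorem stmt_7 (x : ℝ)
    (hx1 : -3 < x)
    (hx2 : x < (3 / 2) * ((1 + Real.sqrt 2) ^ ((1 : ℝ) / 3) - (1 + Real.sqrt 2) ^ (-(1 : ℝ) / 3))) :
    ∑' k : ℕ,
        (((x + 3) * (2 * x - 3) ^ 2 * (x ^ 2 - 12 * x + 9)) * k +
            (2 * x ^ 5 - 48 * x ^ 4 + 69 * x ^ 3 - 189 * x ^ 2 + 243 * x - 81)) *
          x ^ (3 * k) / ((x - 1) ^ k * (Nat.choose (3 * k) k : ℝ)) =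
      12 * x ^ 2 * (1 - x) * Real.log (1 - x) - 27 * (1 - x) * (x ^ 2 - 6 * x + 3) := by
  have hkey : 4 * |x| ^ 3 < 27 * (1 - x) := key_ineq x hx1 hx2
  have hxlt : x < 1 := by nlinarith [pow_nonneg (abs_nonneg x) 3]
  have hxm : x - 1 ≠ 0 := by intro h; rw [sub_eq_zero] at h; exact absurd h (by linarith)
  have h1x : (0:ℝ) < 1 - x := by linarith
  set s : ℝ := (x + 3) * (2 * x - 3) ^ 2 * (x ^ 2 - 12 * x + 9) with hs_def
  set b : ℝ := 2 * x ^ 5 - 48 * x ^ 4 + 69 * x ^ 3 - 189 * x ^ 2 + 243 * x - 81 with hb_def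
  set q : ℝ := 4 * |x| ^ 3 / (27 * (1 - x)) with hq_def
  have hq0 : 0 ≤ q := by positivity
  have hq1 : q < 1 := by rw [hq_def, div_lt_one (by positivity)]; linarith
  -- bound on |z|
  have hzb : ∀ t : ℝ, t ∈ Set.Icc (0:ℝ) 1 → |x^3/(x-1) * (t*(1-t)^2)| ≤ q := by
    intro t ht
    obtain ⟨ht0, ht1⟩ := ht
    have hw0 : 0 ≤ t*(1-t)^2 := by positivity
    have hw : t*(1-t)^2 ≤ 4/27 := by
      nlinarith [mul_nonneg (sq_nonneg (3*t-1)) (by linarith : (0:ℝ) ≤ 4-3*t)]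
    rw [abs_mul, abs_of_nonneg hw0, abs_div, abs_pow]
    have hax : |x - 1| = 1 - x := by rw [abs_of_neg (by linarith : x - 1 < 0)]; ring
    rw [hax, hq_def, div_mul_eq_mul_div, div_le_div_iff₀ (by positivity) (by positivity)]
    nlinarith [mul_le_mul_of_nonneg_right hw
      (mul_nonneg (pow_nonneg (abs_nonneg x) 3) h1x.le),
      pow_nonneg (abs_nonneg x) 3]
  set g : ℕ → ℝ → ℝ :=
    fun k t => (s*(k:ℝ) + b) * (3*(k:ℝ)+1) * (x^3/(x-1))^k * (t^k * (1-t)^(2*k)) with hg_def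
  -- Step A : per-term beta integral
  have hA : ∀ k : ℕ, (s * (k:ℝ) + b) * x ^ (3*k) / ((x-1)^k * ((3*k).choose k : ℝ))
      = ∫ t in (0:ℝ)..1, g k t := by
    intro k
    have hch : ((3*k).choose k) * k.factorial * (2*k).factorial = (3*k).factorial := by
      have h := Nat.choose_mul_factorial_mul_factorial (show k ≤ 3*k by omega)
      rwa [show 3*k - k = 2*k by omega] at h
    have hchR : (((3*k).choose k : ℕ) : ℝ) * (k.factorial : ℝ) * ((2*k).factorial : ℝ)
        = ((3*k).factorial : ℝ) := by exact_mod_cast hch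
    have hC0 : (0:ℝ) < (((3*k).choose k : ℕ) : ℝ) := by
      exact_mod_cast Nat.choose_pos (show k ≤ 3*k by omega)
    have hbeta' : (∫ t in (0:ℝ)..1, t^k * (1-t)^(2*k))
        = 1 / ((3*(k:ℝ)+1) * (((3*k).choose k : ℕ) : ℝ)) := by
      rw [beta_nat (2*k) k, show k + 2*k + 1 = 3*k + 1 by omega, Nat.factorial_succ]
      rw [div_eq_div_iff (by positivity) (by positivity)]
      push_cast
      linear_combination (3*(k:ℝ)+1) * hchR
    have hconst : (∫ t in (0:ℝ)..1, g k t)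
        = ((s*(k:ℝ) + b) * (3*(k:ℝ)+1) * (x^3/(x-1))^k) * ∫ t in (0:ℝ)..1, t^k * (1-t)^(2*k) := by
      rw [← intervalIntegral.integral_const_mul]
    rw [hconst, hbeta']
    have hupow : (x^3/(x-1))^k = x^(3*k) / (x-1)^k := by rw [div_pow, ← pow_mul]
    rw [hupow]
    have h1 : ((x-1):ℝ)^k ≠ 0 := pow_ne_zero _ hxm
    have h31 : (3*(k:ℝ)+1) ≠ 0 := by positivity
    field_simp
  -- positivity facts on [0,1]
  have hDneg : ∀ t ∈ Set.Icc (0:ℝ) 1, auxD x t < 0 := by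
    intro t ht
    have h := lt_of_le_of_lt (hzb t ht) hq1
    have h2 := (abs_lt.1 h).2
    have hrw : auxD x t = (x-1) * (1 - x^3/(x-1) * (t*(1-t)^2)) := by
      rw [auxD]; field_simp; ring
    rw [hrw]
    exact mul_neg_of_neg_of_pos (by linarith) (by linarith)
  have hLpos : ∀ t ∈ Set.Icc (0:ℝ) 1, 0 < auxL x t := by
    intro t ht
    rw [auxL]
    rcases le_or_gt 0 x with h | h
    · nlinarith [ht.1, ht.2]
    · nlinarith [ht.1, ht.2]
  have hMpos : ∀ t ∈ Set.Icc (0:ℝ) 1, 0 < -(auxM x t) := by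
    intro t ht
    have hD := hDneg t ht
    have hL := hLpos t ht
    have hLM := auxLM x t
    by_contra hcon
    push_neg at hcon
    have hM0 : 0 ≤ auxM x t := by linarith
    nlinarith [mul_nonneg hL.le hM0]
  -- pointwise sum
  have hgsum : ∀ t ∈ Set.Icc (0:ℝ) 1, HasSum (fun k => g k t) (auxR x s b t) := by
    intro t ht
    set z : ℝ := x^3/(x-1) * (t*(1-t)^2) with hz_def
    have hzlt : ‖z‖ < 1 := by
      rw [Real.norm_eq_abs]; exact lt_of_le_of_lt (hzb t ht) hq1
    have h3 := hasSum_choose_mul_geometric_of_norm_lt_one 2 hzlt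
    have h2 := hasSum_choose_mul_geometric_of_norm_lt_one 1 hzlt
    have h1 := hasSum_geometric_of_norm_lt_one hzlt
    have hcomb := ((h3.mul_left (6*s)).add (h2.mul_left (3*b-8*s))).add
      (h1.mul_left (2*s-2*b))
    have hval : auxR x s b t
        = (6*s * (1/(1-z)^(2+1)) + (3*b-8*s) * (1/(1-z)^(1+1))) + (2*s-2*b) * (1-z)⁻¹ := by
      rw [auxR]
    rw [hval]
    refine hcomb.congr_fun ?_
    intro k
    have hzk : z^k = (x^3/(x-1))^k * (t^k * (1-t)^(2*k)) := by
      rw [hz_def, mul_pow, mul_pow, ← pow_mul]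
    have hc2 : (((k+2).choose 2 : ℕ) : ℝ) = ((k:ℝ)+1)*((k:ℝ)+2)/2 := by
      rw [Nat.cast_choose_two]
      push_cast
      ring
    have hc1 : (((k+1).choose 1 : ℕ) : ℝ) = (k:ℝ)+1 := by
      rw [Nat.choose_one_right]; push_cast; ring
    simp only [hg_def]
    rw [hzk, hc2, hc1]
    ring
  -- continuity of g k
  have hg_cont : ∀ k : ℕ, Continuous (g k) := by
    intro k
    simp only [hg_def]
    fun_prop
  have hg_int : ∀ k : ℕ, MeasureTheory.Integrable (g k)
      (MeasureTheory.volume.restrict (Set.Ioc (0:ℝ) 1)) :=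
    fun k => (hg_cont k).integrableOn_Ioc
  -- norm bound for each g k on Ioc
  have hgb : ∀ k : ℕ, ∀ t ∈ Set.Ioc (0:ℝ) 1,
      ‖g k t‖ ≤ (|s| * (k:ℝ) + |b|) * (3*(k:ℝ)+1) * q^k := by
    intro k t ht'
    have ht : t ∈ Set.Icc (0:ℝ) 1 := ⟨ht'.1.le, ht'.2⟩
    have hz := hzb t ht
    have hgz : g k t = (s*(k:ℝ)+b) * (3*(k:ℝ)+1) * (x^3/(x-1) * (t*(1-t)^2))^k := by
      simp only [hg_def]
      rw [mul_pow, mul_pow, ← pow_mul, mul_comm 2 k]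
      ring
    rw [hgz, Real.norm_eq_abs, abs_mul, abs_mul]
    have e1 : |s*(k:ℝ)+b| ≤ |s| * (k:ℝ)+|b| := by
      calc |s*(k:ℝ)+b| ≤ |s*(k:ℝ)| + |b| := abs_add_le _ _
        _ = |s| * (k:ℝ)+|b| := by rw [abs_mul, Nat.abs_cast]
    have e2 : |3*(k:ℝ)+1| = 3*(k:ℝ)+1 := abs_of_nonneg (by positivity)
    have e3 : |(x^3/(x-1) * (t*(1-t)^2))^k| ≤ q^k := by
      rw [abs_pow]
      exact pow_le_pow_left₀ (abs_nonneg _) hz k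
    rw [e2]
    have h31 : (0:ℝ) ≤ 3*(k:ℝ)+1 := by positivity
    gcongr
  -- majorant summable
  have hmaj : Summable (fun k : ℕ => (|s| * (k:ℝ) + |b|) * (3*(k:ℝ)+1) * q^k) := by
    have hqn : ‖q‖ < 1 := by rwa [Real.norm_eq_abs, abs_of_nonneg hq0]
    have h2 := summable_pow_mul_geometric_of_norm_lt_one (R := ℝ) 2 hqn
    have h1 := summable_pow_mul_geometric_of_norm_lt_one (R := ℝ) 1 hqn
    have h0 := summable_pow_mul_geometric_of_norm_lt_one (R := ℝ) 0 hqn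
    have hcomb := (((h2.mul_left (3 * |s|)).add (h1.mul_left (|s| + 3 * |b|))).add
      (h0.mul_left |b|))
    apply hcomb.congr
    intro k
    push_cast
    ring
  have hints : Summable (fun k : ℕ => ∫ t in Set.Ioc (0:ℝ) 1, ‖g k t‖) := by
    apply Summable.of_nonneg_of_le
      (fun k => MeasureTheory.integral_nonneg (fun t => norm_nonneg _)) _ hmaj
    intro k
    have hb1 : ‖∫ t in Set.Ioc (0:ℝ) 1, ‖g k t‖‖
        ≤ ((|s| * (k:ℝ) + |b|) * (3*(k:ℝ)+1) * q^k)
            * (MeasureTheory.volume (Set.Ioc (0:ℝ) 1)).toReal := by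
      apply MeasureTheory.norm_setIntegral_le_of_norm_le_const
      · rw [Real.volume_Ioc]; norm_num
      · intro t ht
        rw [norm_norm]
        exact hgb k t ht
    have hm1 : (MeasureTheory.volume (Set.Ioc (0:ℝ) 1)).toReal = 1 := by
      rw [Real.volume_Ioc]
      norm_num
    rw [hm1, mul_one] at hb1
    exact le_trans (le_abs_self _) hb1
  have hswap := MeasureTheory.integral_tsum_of_summable_integral_norm
    (μ := MeasureTheory.volume.restrict (Set.Ioc (0:ℝ) 1)) (F := g) hg_int hints
  -- integrand identification
  have hpt : (∫ t in Set.Ioc (0:ℝ) 1, (∑' k, g k t))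
      = ∫ t in Set.Ioc (0:ℝ) 1, auxR x s b t := by
    apply MeasureTheory.setIntegral_congr_fun measurableSet_Ioc
    intro t ht
    exact (hgsum t ⟨ht.1.le, ht.2⟩).tsum_eq
  -- continuity of auxR on [0,1]
  have h1zne : ∀ t ∈ Set.Icc (0:ℝ) 1, (1 - x^3/(x-1) * (t*(1-t)^2)) ≠ 0 := by
    intro t ht
    have h := (abs_lt.1 (lt_of_le_of_lt (hzb t ht) hq1)).2
    intro hcon
    nlinarith
  have hzc : Continuous (fun t : ℝ => 1 - x^3/(x-1) * (t*(1-t)^2)) := by fun_prop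
  have hRcont : ContinuousOn (fun t => auxR x s b t) (Set.Icc (0:ℝ) 1) := by
    simp only [auxR]
    apply ContinuousOn.add
    apply ContinuousOn.add
    · exact continuousOn_const.mul (continuousOn_const.div
        ((hzc.continuousOn).pow 3) (fun t ht => pow_ne_zero 3 (h1zne t ht)))
    · exact continuousOn_const.mul (continuousOn_const.div
        ((hzc.continuousOn).pow 2) (fun t ht => pow_ne_zero 2 (h1zne t ht)))
    · exact continuousOn_const.mul ((hzc.continuousOn).inv₀ h1zne)
  have hRint : IntervalIntegrable (fun t => auxR x s b t) MeasureTheory.volume 0 1 := by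
    apply ContinuousOn.intervalIntegrable
    rwa [Set.uIcc_of_le (by norm_num : (0:ℝ) ≤ 1)]
  have hderiv : ∀ t ∈ Set.uIcc (0:ℝ) 1, HasDerivAt (auxH x) (auxR x s b t) t := by
    intro t ht
    rw [Set.uIcc_of_le (by norm_num : (0:ℝ) ≤ 1)] at ht
    have h := auxH_deriv x t hxm (hDneg t ht).ne (hLpos t ht) (hMpos t ht)
    rwa [← hs_def, ← hb_def] at h
  have hFTC := intervalIntegral.integral_eq_sub_of_hasDerivAt hderiv hRint
  -- endpoint values
  have hL1 : auxL x 1 = 1 := by rw [auxL]; ring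
  have hL0 : auxL x 0 = 1 - x := by rw [auxL]; ring
  have hD1 : auxD x 1 = x - 1 := by rw [auxD]; ring
  have hD0 : auxD x 0 = x - 1 := by rw [auxD]; ring
  have hM1 : -(auxM x 1) = 1 - x := by rw [auxM]; ring
  have hM0 : -(auxM x 0) = 1 := by rw [auxM]; ring
  have hdiff : auxH x 1 - auxH x 0
      = 12 * x ^ 2 * (1 - x) * Real.log (1 - x) - 27 * (1 - x) * (x ^ 2 - 6 * x + 3) := by
    rw [auxH, auxH, hL1, hL0, hD1, hD0, hM1, hM0, Real.log_one]
    have hAd : auxA x 1 - auxA x 0 = (x-1)^2 * (27*x^3 - 189*x^2 + 243*x - 81) := by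
      simp only [auxA]; ring
    have hsq : ((x:ℝ)-1)^2 ≠ 0 := pow_ne_zero _ hxm
    field_simp
    nlinarith [hAd, Real.log_one]
  calc (∑' k : ℕ, (s * (k:ℝ) + b) * x ^ (3*k) / ((x-1)^k * ((3*k).choose k : ℝ)))
      = ∑' k : ℕ, ∫ t in (0:ℝ)..1, g k t := tsum_congr hA
    _ = ∑' k : ℕ, ∫ t in Set.Ioc (0:ℝ) 1, g k t := by
        apply tsum_congr
        intro k
        exact intervalIntegral.integral_of_le (by norm_num)
    _ = ∫ t in Set.Ioc (0:ℝ) 1, (∑' k, g k t) := hswap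
    _ = ∫ t in Set.Ioc (0:ℝ) 1, auxR x s b t := hpt
    _ = ∫ t in (0:ℝ)..1, auxR x s b t := (intervalIntegral.integral_of_le (by norm_num)).symm
    _ = auxH x 1 - auxH x 0 := hFTC
    _ = 12 * x ^ 2 * (1 - x) * Real.log (1 - x) - 27 * (1 - x) * (x ^ 2 - 6 * x + 3) := hdiff
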